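/- Let γ = [[γ₁₁,γ₁₂],[γ₂₁,γ₂₂]] ∈ SL(2,ℝ), let x,y,z ∈ ℝ, let y₁,y₂ > 0, let k ∈ SO(3,ℝ), and set δ = |γ₂₁(x+iy₁)+γ₂₂| = √((γ₂₁x+γ₂₂)² + γ₂₁²y₁²) (which is positive). Then there exist x',y',z' ∈ ℝ and k' ∈ SO(3,ℝ) such that γ̃·u(x,y,z)·a_{y₁,y₂}·k = u(x',y',z')·a_{y₁/δ², y₂δ}·k', where γ̃ ∈ SL(3,ℝ) is the block-diagonal matrix with upper-left 2×2 block γ and lower-right entry 1. -/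

import Mathlib

open scoped Real

noncomputable section

/-- The upper-triangular unipotent matrix `u(x,y,z)`. -/
def uMat (x y z : ℝ) : Matrix (Fin 3) (Fin 3) ℝ :=
  !![1, x, z; 0, 1, y; 0, 0, 1]

/-- The diagonal matrix `a_{y₁,y₂} = diag(y₁^{2/3}y₂^{1/3}, y₁^{-1/3}y₂^{1/3}, y₁^{-1/3}y₂^{-2/3})`. -/
def aMat (y₁ y₂ : ℝ) : Matrix (Fin 3) (Fin 3) ℝ :=
  !![y₁ ^ ((2:ℝ)/3) * y₂ ^ ((1:ℝ)/3), 0, 0;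
     0, y₁ ^ (-(1:ℝ)/3) * y₂ ^ ((1:ℝ)/3), 0;
     0, 0, y₁ ^ (-(1:ℝ)/3) * y₂ ^ (-(2:ℝ)/3)]

/-- Conjugation of the `a` part of the diagonal decomposition. -/
lemma aMat_div (y₁ y₂ δ : ℝ) (h₁ : 0 < y₁) (h₂ : 0 < y₂) (hδ : 0 < δ) :
    aMat (y₁ / δ ^ 2) (y₂ * δ) = aMat y₁ y₂ * !![δ⁻¹, 0, 0; 0, δ, 0; 0, 0, 1] := by
  have key : ∀ p q : ℝ, (y₁/δ^2)^p * (y₂*δ)^q = y₁^p * y₂^q * δ^(q - 2*p) := by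
    intro p q
    rw [Real.div_rpow h₁.le (by positivity), Real.mul_rpow h₂.le hδ.le, Real.rpow_sub hδ,
        ← Real.rpow_natCast δ 2, ← Real.rpow_mul hδ.le]
    push_cast; ring
  ext i j
  fin_cases i <;> fin_cases j <;>
    simp [aMat, Matrix.mul_apply, Fin.sum_univ_three, Matrix.vecHead, Matrix.vecTail, key] <;>
    norm_num [Real.rpow_neg_one, Real.rpow_one, Real.rpow_zero]

/-- The rotation matrix used in the Iwasawa decomposition is special orthogonal. -/
lemma rot_mem (c d x y₁ δ : ℝ) (hδ : 0 < δ) (hδsq : δ ^ 2 = (c*x+d)^2 + c^2*y₁^2) :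
    (!![(c*x+d)/δ, -(c*y₁)/δ, 0; (c*y₁)/δ, (c*x+d)/δ, 0; 0, 0, 1] : Matrix (Fin 3) (Fin 3) ℝ)
      ∈ Matrix.specialOrthogonalGroup (Fin 3) ℝ := by
  have hδ0 : δ ≠ 0 := hδ.ne'
  rw [Matrix.mem_specialOrthogonalGroup_iff]
  constructor
  · rw [Matrix.mem_orthogonalGroup_iff]
    ext i j
    fin_cases i <;> fin_cases j <;>
      simp [Matrix.mul_apply, Fin.sum_univ_three, Matrix.one_apply, Matrix.vecHead,
        Matrix.vecTail] <;>
      field_simp <;>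
      (first | ring1 | linear_combination -hδsq | linear_combination -2*hδsq |
        linear_combination hδsq | linear_combination 2*hδsq)
  · rw [Matrix.det_fin_three]
    simp [Matrix.vecHead, Matrix.vecTail]
    field_simp
    (first | linear_combination -hδsq | linear_combination -2*hδsq |
      linear_combination hδsq | linear_combination 2*hδsq)

set_option maxHeartbeats 2000000 in
/-- The main matrix identity. -/
lemma main_identity (a0 b0 c d x y z y₁ y₂ δ : ℝ) (h₁ : 0 < y₁) (hδ : 0 < δ)
    (hγ : a0 * d - b0 * c = 1) (hδsq : δ ^ 2 = (c*x+d)^2 + c^2*y₁^2) :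
    (!![a0, b0, 0; c, d, 0; 0, 0, 1] : Matrix (Fin 3) (Fin 3) ℝ) *
      uMat x y z * aMat y₁ y₂ =
    uMat (((a0*x+b0)*(c*x+d) + a0*c*y₁^2)/δ^2) (c*z+d*y) (a0*z+b0*y) *
      (aMat y₁ y₂ * !![δ⁻¹, 0, 0; 0, δ, 0; 0, 0, 1]) *
      !![(c*x+d)/δ, -(c*y₁)/δ, 0; (c*y₁)/δ, (c*x+d)/δ, 0; 0, 0, 1] := by
  have hδ0 : δ ≠ 0 := hδ.ne'
  have hA : y₁ ^ ((2:ℝ)/3) = y₁ * y₁ ^ (-(1:ℝ)/3) := by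
    rw [show ((2:ℝ)/3) = 1 + (-(1:ℝ)/3) by norm_num, Real.rpow_add h₁, Real.rpow_one]
  ext i j
  fin_cases i <;> fin_cases j <;>
    simp [uMat, aMat, Matrix.mul_apply, Fin.sum_univ_three, Matrix.vecHead, Matrix.vecTail,
      hA] <;>
    field_simp <;>
    (first
      | ring1
      | linear_combination (y₁ ^ (-(1:ℝ)/3) * y₂ ^ ((1:ℝ)/3) * y₁ * δ^3 * a0) * hδsq +
          (y₁ ^ (-(1:ℝ)/3) * y₂ ^ ((1:ℝ)/3) * y₁ * δ^3 * (c*x+d)) * hγ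
      | linear_combination (y₁ ^ (-(1:ℝ)/3) * y₂ ^ ((1:ℝ)/3) * δ^3 * (a0*x+b0)) * hδsq -
          (y₁ ^ (-(1:ℝ)/3) * y₂ ^ ((1:ℝ)/3) * δ^3 * c * y₁^2) * hγ
      | linear_combination (y₂ ^ ((1:ℝ)/3) * a0) * hδsq + (y₂ ^ ((1:ℝ)/3) * (c*x+d)) * hγ
      | linear_combination (y₂ ^ ((1:ℝ)/3) * (a0*x+b0)) * hδsq - (y₂ ^ ((1:ℝ)/3) * c * y₁^2) * hγ)

theorem statement3 (γ : Matrix (Fin 2) (Fin 2) ℝ) (hγ : γ.det = 1)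
    (x y z y₁ y₂ : ℝ) (h₁ : 0 < y₁) (h₂ : 0 < y₂)
    (k : Matrix (Fin 3) (Fin 3) ℝ) (hk : k ∈ Matrix.specialOrthogonalGroup (Fin 3) ℝ) :
    0 < Real.sqrt ((γ 1 0 * x + γ 1 1) ^ 2 + (γ 1 0) ^ 2 * y₁ ^ 2) ∧
    ∃ (x' y' z' : ℝ) (k' : Matrix (Fin 3) (Fin 3) ℝ),
      k' ∈ Matrix.specialOrthogonalGroup (Fin 3) ℝ ∧
      (!![γ 0 0, γ 0 1, 0; γ 1 0, γ 1 1, 0; 0, 0, 1] : Matrix (Fin 3) (Fin 3) ℝ) *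
          uMat x y z * aMat y₁ y₂ * k =
        uMat x' y' z' *
          aMat (y₁ / (Real.sqrt ((γ 1 0 * x + γ 1 1) ^ 2 + (γ 1 0) ^ 2 * y₁ ^ 2)) ^ 2)
            (y₂ * Real.sqrt ((γ 1 0 * x + γ 1 1) ^ 2 + (γ 1 0) ^ 2 * y₁ ^ 2)) * k' := by
  rw [Matrix.det_fin_two] at hγ
  set a0 := γ 0 0
  set b0 := γ 0 1
  set c := γ 1 0
  set d := γ 1 1
  have hpos : 0 < (c * x + d) ^ 2 + c ^ 2 * y₁ ^ 2 := by
    rcases eq_or_ne c 0 with h | h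
    · have hd0 : d ≠ 0 := by intro h'; rw [h, h'] at hγ; simp at hγ
      simp only [h]
      have : (0:ℝ) * x + d = d := by ring
      rw [this]
      positivity
    · have h2 : 0 < c ^ 2 * y₁ ^ 2 := by positivity
      nlinarith [sq_nonneg (c * x + d)]
  set δ := Real.sqrt ((c * x + d) ^ 2 + c ^ 2 * y₁ ^ 2) with hδdef
  have hδ : 0 < δ := Real.sqrt_pos.mpr hpos
  have hδsq : δ ^ 2 = (c * x + d) ^ 2 + c ^ 2 * y₁ ^ 2 := Real.sq_sqrt hpos.le
  refine ⟨hδ, ((a0*x+b0)*(c*x+d) + a0*c*y₁^2)/δ^2, c*z+d*y, a0*z+b0*y,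
    !![(c*x+d)/δ, -(c*y₁)/δ, 0; (c*y₁)/δ, (c*x+d)/δ, 0; 0, 0, 1] * k,
    mul_mem (rot_mem c d x y₁ δ hδ hδsq) hk, ?_⟩
  rw [aMat_div y₁ y₂ δ h₁ h₂ hδ, main_identity a0 b0 c d x y z y₁ y₂ δ h₁ hδ hγ hδsq,
    Matrix.mul_assoc]
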